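/- arXiv:1405.3163 — 3 statements merged into one kernel-verified Lean document; each statement's English description precedes it below -/
import Mathlib

section
/- Let g be a finite-dimensional complex semisimple Lie algebra equipped with a bigrading g = ⊕_{p,q ∈ ℤ} g^{p,q} satisfying ⁅g^{p,q}, g^{r,s}⁆ ⊆ g^{p+r, q+s}, and with a real structure σ (a conjugate-linear Lie algebra involution of g) satisfying σ(g^{p,q}) = g^{q,p} for all p, q. Then l = ⊕_p g^{p,p} is a σ-stable Lie subalgebra of g, and there exists an element x ∈ g with ad(x) diagonalizable whose centralizer in g equals l; that is, l is a Levi subalgebra of g defined over ℝ. -/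
set_option maxHeartbeats 1000000
set_option synthInstance.maxHeartbeats 200000

section Aux

variable {g : Type*} [LieRing g] [LieAlgebra ℂ g] [FiniteDimensional ℂ g]

theorem aux_isKilling (hss : (killingForm ℂ g).Nondegenerate) :
    LieAlgebra.IsKilling ℂ g := by
  constructor
  rw [eq_bot_iff]
  intro x hx
  rw [LieIdeal.mem_killingCompl] at hx
  rw [LieSubmodule.mem_bot]
  exact hss.1 x fun y => by rw [← LieModule.traceForm_comm]; exact hx y trivial

theorem aux_exists (hss : (killingForm ℂ g).Nondegenerate)
    (G : ℤ → ℤ → Submodule ℂ g)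
    (hinternal : DirectSum.IsInternal (fun pq : ℤ × ℤ => G pq.1 pq.2))
    (hbracket : ∀ p q r s : ℤ, ∀ x ∈ G p q, ∀ y ∈ G r s, ⁅x, y⁆ ∈ G (p + r) (q + s)) :
    ∃ E : g, (⨆ μ : ℂ, Module.End.eigenspace (LieAlgebra.ad ℂ g E) μ) = ⊤ ∧
      ∀ y : g, ⁅E, y⁆ = 0 ↔ y ∈ (⨆ p : ℤ, G p p) := by
  classical
  haveI : LieAlgebra.IsKilling ℂ g := aux_isKilling hss
  set ℳ : ℤ × ℤ → Submodule ℂ g := fun pq => G pq.1 pq.2 with hℳ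
  haveI : DirectSum.Decomposition ℳ := hinternal.chooseDecomposition
  set d : ℤ × ℤ → ℂ := fun pq => ((pq.1 - pq.2 : ℤ) : ℂ) with hd
  set Dlin : g →ₗ[ℂ] g :=
    (DirectSum.toModule ℂ (ℤ × ℤ) g fun pq => d pq • (ℳ pq).subtype) ∘ₗ
      (DirectSum.decomposeLinearEquiv ℳ).toLinearMap with hDlin
  -- action on homogeneous elements
  have hD : ∀ (pq : ℤ × ℤ) (x : g), x ∈ ℳ pq → Dlin x = d pq • x := by
    intro pq x hx
    have h1 : DirectSum.decompose ℳ x = DirectSum.of _ pq (⟨x, hx⟩ : ℳ pq) :=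
      DirectSum.decompose_of_mem ℳ hx
    simp only [hDlin, LinearMap.comp_apply, LinearEquiv.coe_coe,
      DirectSum.decomposeLinearEquiv_apply, h1, ← DirectSum.lof_eq_of ℂ,
      DirectSum.toModule_lof]
    rfl
  -- components of Dlin
  have hcomp : ∀ y : g, ∀ pq : ℤ × ℤ,
      (DirectSum.decompose ℳ (Dlin y) pq : g) = d pq • (DirectSum.decompose ℳ y pq : g) := by
    refine fun y => DirectSum.Decomposition.inductionOn ℳ
      (motive := fun y => ∀ pq, (DirectSum.decompose ℳ (Dlin y) pq : g)
        = d pq • (DirectSum.decompose ℳ y pq : g)) ?_ ?_ ?_ y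
    · intro pq; simp
    · rintro j ⟨m, hm⟩ pq
      rw [hD j m hm, DirectSum.decompose_smul, DirectSum.decompose_of_mem ℳ hm]
      by_cases h : j = pq
      · subst h
        simp [DirectSum.smul_apply, DirectSum.of_eq_same]
      · simp [DirectSum.smul_apply, DirectSum.of_eq_of_ne _ _ _ (Ne.symm h)]
    · intro a b ha hb pq
      simp only [map_add, DirectSum.decompose_add, DirectSum.add_apply, Submodule.coe_add, ha pq, hb pq, smul_add]
  -- Leibniz rule
  have hlei : ∀ a b : g, Dlin ⁅a, b⁆ = ⁅Dlin a, b⁆ + ⁅a, Dlin b⁆ := by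
    refine fun a => DirectSum.Decomposition.inductionOn ℳ
      (motive := fun a => ∀ b, Dlin ⁅a, b⁆ = ⁅Dlin a, b⁆ + ⁅a, Dlin b⁆) ?_ ?_ ?_ a
    · intro b; simp
    · rintro i ⟨x, hxi⟩
      refine DirectSum.Decomposition.inductionOn ℳ ?_ ?_ ?_
      · simp
      · rintro j ⟨y, hyj⟩
        have hmem : ⁅x, y⁆ ∈ ℳ (i + j) := hbracket i.1 i.2 j.1 j.2 x hxi y hyj
        rw [hD _ _ hmem, hD i x hxi, hD j y hyj, smul_lie, lie_smul, ← add_smul]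
        congr 1
        simp only [hd, Prod.fst_add, Prod.snd_add]
        push_cast
        ring
      · intro m m' hm hm'
        simp only [lie_add, map_add, hm, hm']
        abel
    · intro a a' ha ha' b
      simp only [add_lie, map_add, ha b, ha' b]
      abel
  -- build a derivation and an inner element
  let Dder : LieDerivation ℂ g g :=
    { toLinearMap := Dlin
      leibniz' := fun a b => by
        rw [hlei a b, ← lie_skew b (Dlin a)]
        abel }
  obtain ⟨E, hE⟩ := LieDerivation.IsKilling.exists_eq_ad Dder
  have hadE : ∀ y : g, ⁅E, y⁆ = Dlin y := by
    intro y
    have h1 := DFunLike.congr_fun hE y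
    have h2 : (LieDerivation.ad ℂ g E) y = ⁅E, y⁆ := by
      have := DFunLike.congr_fun (LieDerivation.coe_ad_apply_eq_ad_apply (R := ℂ) E) y
      simpa using this
    rw [h2] at h1
    exact h1
  refine ⟨E, ?_, ?_⟩
  · rw [eq_top_iff, ← hinternal.submodule_iSup_eq_top]
    refine iSup_le fun pq => le_trans ?_ (le_iSup _ (d pq))
    intro x hx
    rw [Module.End.mem_eigenspace_iff, LieAlgebra.ad_apply, hadE x,
      hD pq x hx]
  · intro y
    constructor
    · intro hy
      have h0 : Dlin y = 0 := (hadE y).symm.trans hy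
      have hzero : ∀ pq : ℤ × ℤ, pq.1 ≠ pq.2 → (DirectSum.decompose ℳ y pq : g) = 0 := by
        intro pq hne
        have h1 : d pq • (DirectSum.decompose ℳ y pq : g) = 0 := by
          rw [← hcomp y pq, h0]; simp
        have hdne : d pq ≠ 0 := by
          simp only [hd, ne_eq, Int.cast_eq_zero, sub_eq_zero]
          exact hne
        exact (smul_eq_zero.mp h1).resolve_left hdne
      rw [← DirectSum.sum_support_decompose ℳ y]
      refine Submodule.sum_mem _ fun pq _ => ?_
      by_cases h : pq.1 = pq.2
      · refine le_iSup (fun p => G p p) pq.1 ?_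
        have h2 : (DirectSum.decompose ℳ y pq : g) ∈ G pq.1 pq.2 :=
          (DirectSum.decompose ℳ y pq).2
        rwa [← h] at h2
      · rw [hzero pq h]; exact zero_mem _
    · intro hy
      rw [hadE y]
      refine Submodule.iSup_induction (motive := fun z => Dlin z = 0) _ hy ?_ ?_ ?_
      · intro p x hx
        rw [hD (p, p) x hx]
        simp [hd]
      · simp
      · intro a b ha hb; rw [map_add, ha, hb, add_zero]

end Aux

/-- **The diagonal of a real bigraded semisimple Lie algebra is a Levi subalgebra over ℝ.**
Let `g = ⊕_{p,q} g^{p,q}` be a finite-dimensional bigraded complex Lie algebra with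
nondegenerate Killing form (semisimple), `⁅g^{p,q}, g^{r,s}⁆ ⊆ g^{p+r,q+s}`, equipped with a
real structure `σ` (a conjugate-linear Lie algebra involution) with `σ(g^{p,q}) = g^{q,p}`.
Then `l = ⊕_p g^{p,p}` is a `σ`-stable Lie subalgebra, and there is an ad-diagonalizable
element of `g` whose centralizer is exactly `l`. -/
theorem diagonal_of_bigrading_is_real_levi
    (g : Type*) [LieRing g] [LieAlgebra ℂ g] [FiniteDimensional ℂ g]
    (hss : (killingForm ℂ g).Nondegenerate)
    (G : ℤ → ℤ → Submodule ℂ g)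
    (hinternal : DirectSum.IsInternal (fun pq : ℤ × ℤ => G pq.1 pq.2))
    (hbracket : ∀ p q r s : ℤ, ∀ x ∈ G p q, ∀ y ∈ G r s, ⁅x, y⁆ ∈ G (p + r) (q + s))
    (σ : g → g)
    (hadd : ∀ x y : g, σ (x + y) = σ x + σ y)
    (hsmul : ∀ (c : ℂ) (x : g), σ (c • x) = (starRingEnd ℂ) c • σ x)
    (hbr : ∀ x y : g, σ ⁅x, y⁆ = ⁅σ x, σ y⁆)
    (hinvol : ∀ x : g, σ (σ x) = x)
    (hconj : ∀ p q : ℤ, σ '' (G p q : Set g) = (G q p : Set g)) :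
    (∀ x ∈ (⨆ p : ℤ, G p p), ∀ y ∈ (⨆ p : ℤ, G p p), ⁅x, y⁆ ∈ (⨆ p : ℤ, G p p)) ∧
    (∀ x ∈ (⨆ p : ℤ, G p p), σ x ∈ (⨆ p : ℤ, G p p)) ∧
    (∃ E : g,
      (⨆ μ : ℂ, Module.End.eigenspace (LieAlgebra.ad ℂ g E) μ) = ⊤ ∧
      ∀ y : g, ⁅E, y⁆ = 0 ↔ y ∈ (⨆ p : ℤ, G p p)) := by
  refine ⟨?_, ?_, aux_exists hss G hinternal hbracket⟩
  · intro x hx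
    refine Submodule.iSup_induction (motive := fun x => ∀ y ∈ ⨆ p : ℤ, G p p,
      ⁅x, y⁆ ∈ ⨆ p : ℤ, G p p) _ hx ?_ ?_ ?_
    · intro p x hxp y hy
      refine Submodule.iSup_induction (motive := fun y => ⁅x, y⁆ ∈ ⨆ p : ℤ, G p p) _ hy ?_ ?_ ?_
      · intro q y hyq
        exact le_iSup (fun p => G p p) (p + q) (hbracket p p q q x hxp y hyq)
      · simp
      · intro a b ha hb
        rw [lie_add]
        exact add_mem ha hb
    · intro y hy; simp
    · intro a b ha hb y hy
      rw [add_lie]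
      exact add_mem (ha y hy) (hb y hy)
  · intro x hx
    have h0 : σ 0 = 0 := by
      have := hsmul 0 0
      simpa using this
    refine Submodule.iSup_induction (motive := fun x => σ x ∈ ⨆ p : ℤ, G p p) _ hx ?_ ?_ ?_
    · intro p x hxp
      have hmem : σ x ∈ (G p p : Set g) := by
        rw [← hconj p p]
        exact ⟨x, hxp, rfl⟩
      exact le_iSup (fun p => G p p) p hmem
    · show σ 0 ∈ _
      rw [h0]; exact zero_mem _
    · intro a b ha hb
      rw [hadd]
      exact add_mem ha hb
end

section
/- Let g_R be a finite-dimensional real Lie algebra, θ an involutive Lie algebra automorphism of g_R, and (h, e, f) an sl2-triple in g_R satisfying θ(f) = −e and θ(h) = −h (a Cayley triple; note that θ(e) = −f then follows). In the complexification g_C = g_R ⊗ ℂ, with conjugation σ and with θ_C the complex-linear extension of θ, set Ē = (1/2)·(e + f − i·h), Z = i·(f − e), and E = (1/2)·(e + f + i·h). Then (Z, Ē, E) is an sl2-triple satisfying θ_C(Z) = Z, θ_C(E) = −E, θ_C(Ē) = −Ē, and σ(E) = Ē. -/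
open scoped TensorProduct

/-- A standard (sl₂) triple in a Lie ring: neutral element `h`, nilpositive `e`,
nilnegative `f`, with `⁅h, e⁆ = 2e`, `⁅h, f⁆ = -2f`, `⁅e, f⁆ = h` and `e ≠ 0`. -/
def IsStdTriple {g : Type*} [LieRing g] (h e f : g) : Prop :=
  ⁅h, e⁆ = 2 • e ∧ ⁅h, f⁆ = -(2 • f) ∧ ⁅e, f⁆ = h ∧ e ≠ 0

/-- The conjugation (real structure) on the complexification `ℂ ⊗[ℝ] gR`. -/
noncomputable def conjC (gR : Type*) [AddCommGroup gR] [Module ℝ gR] :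
    (ℂ ⊗[ℝ] gR) →ₗ[ℝ] (ℂ ⊗[ℝ] gR) :=
  TensorProduct.map Complex.conjAe.toLinearMap LinearMap.id

/-- **The Cayley transform of a Cayley triple is a DKS-triple.**
Let `gR` be a finite-dimensional real Lie algebra, `θ` an involutive Lie algebra
automorphism, and `(h, e, f)` an sl₂-triple with `θ f = -e` and `θ h = -h` (a Cayley
triple).  In the complexification `ℂ ⊗[ℝ] gR`, with conjugation `σ` and `θ_C` the
complex-linear extension of `θ`, the elements `Ē = (1/2)(e + f - i h)`, `Z = i(f - e)`,
`E = (1/2)(e + f + i h)` form an sl₂-triple with `θ_C Z = Z`, `θ_C E = -E`,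
`θ_C Ē = -Ē` and `σ E = Ē`. -/
theorem cayleyTriple_transform_isDKS
    (gR : Type*) [LieRing gR] [LieAlgebra ℝ gR] [FiniteDimensional ℝ gR]
    (θ : gR →ₗ⁅ℝ⁆ gR) (hinvol : ∀ x : gR, θ (θ x) = x)
    (h e f : gR) (hT : IsStdTriple h e f)
    (hf : θ f = -e) (hh : θ h = -h) :
    ∀ Z Ebar E : ℂ ⊗[ℝ] gR,
      Z = Complex.I • ((1 : ℂ) ⊗ₜ[ℝ] f - (1 : ℂ) ⊗ₜ[ℝ] e) →
      Ebar = (2⁻¹ : ℂ) •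
        ((1 : ℂ) ⊗ₜ[ℝ] e + (1 : ℂ) ⊗ₜ[ℝ] f - Complex.I • ((1 : ℂ) ⊗ₜ[ℝ] h)) →
      E = (2⁻¹ : ℂ) •
        ((1 : ℂ) ⊗ₜ[ℝ] e + (1 : ℂ) ⊗ₜ[ℝ] f + Complex.I • ((1 : ℂ) ⊗ₜ[ℝ] h)) →
      IsStdTriple Z Ebar E ∧
      LinearMap.baseChange ℂ θ.toLinearMap Z = Z ∧
      LinearMap.baseChange ℂ θ.toLinearMap E = -E ∧
      LinearMap.baseChange ℂ θ.toLinearMap Ebar = -Ebar ∧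
      conjC gR E = Ebar := by
  obtain ⟨hbe, hbf, hbef, he0⟩ := hT
  have he : θ e = -f := by
    have h1 := hinvol f
    rw [hf, map_neg] at h1
    exact neg_eq_iff_eq_neg.mp h1
  have hh0 : h ≠ 0 := by
    intro h0
    apply he0
    rw [h0, zero_lie] at hbe
    have h2 : (2:ℝ) • e = 0 := by
      rw [two_smul]; rw [two_smul] at hbe; exact hbe.symm
    simpa [smul_eq_zero] using h2
  intro Z Ebar E hZ hEb hE
  subst hZ hEb hE
  set te : ℂ ⊗[ℝ] gR := (1:ℂ) ⊗ₜ[ℝ] e with hte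
  set tf : ℂ ⊗[ℝ] gR := (1:ℂ) ⊗ₜ[ℝ] f with htf
  set th : ℂ ⊗[ℝ] gR := (1:ℂ) ⊗ₜ[ℝ] h with hth
  have sl : ∀ (c : ℂ) (x y : ℂ ⊗[ℝ] gR), ⁅c • x, y⁆ = c • ⁅x, y⁆ :=
    fun c x y => smul_lie c x y
  have ls : ∀ (c : ℂ) (x y : ℂ ⊗[ℝ] gR), ⁅x, c • y⁆ = c • ⁅x, y⁆ :=
    fun c x y => lie_smul c x y
  have Bhe : ⁅th, te⁆ = (2:ℂ) • te := by
    rw [hth, hte, LieAlgebra.ExtendScalars.bracket_tmul, hbe]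
    simp [TensorProduct.tmul_smul, two_smul, TensorProduct.tmul_add]
  have Bhf : ⁅th, tf⁆ = -((2:ℂ) • tf) := by
    rw [hth, htf, LieAlgebra.ExtendScalars.bracket_tmul, hbf]
    simp [TensorProduct.tmul_smul, two_smul, TensorProduct.tmul_add, TensorProduct.tmul_neg]
  have Bef : ⁅te, tf⁆ = th := by
    rw [hte, htf, hth, LieAlgebra.ExtendScalars.bracket_tmul, hbef, one_mul]
  have Beh : ⁅te, th⁆ = -((2:ℂ) • te) := by rw [← lie_skew, Bhe]
  have Bfh : ⁅tf, th⁆ = (2:ℂ) • tf := by rw [← lie_skew, Bhf, neg_neg]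
  have Bfe : ⁅tf, te⁆ = -th := by rw [← lie_skew, Bef]
  have Te : LinearMap.baseChange ℂ θ.toLinearMap te = -tf := by
    rw [hte, htf, LinearMap.baseChange_tmul]
    simp [he, TensorProduct.tmul_neg]
  have Tf : LinearMap.baseChange ℂ θ.toLinearMap tf = -te := by
    rw [hte, htf, LinearMap.baseChange_tmul]
    simp [hf, TensorProduct.tmul_neg]
  have Th : LinearMap.baseChange ℂ θ.toLinearMap th = -th := by
    rw [hth, LinearMap.baseChange_tmul]
    simp [hh, TensorProduct.tmul_neg]
  clear_value te tf th
  refine ⟨⟨?_, ?_, ?_, ?_⟩, ?_, ?_, ?_, ?_⟩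
  · -- ⁅Z, Ebar⁆ = 2 • Ebar
    rw [two_smul]
    simp only [smul_add, smul_sub, smul_smul]
    simp only [lie_add, add_lie, lie_sub, sub_lie]
    simp only [sl, ls]
    simp only [Bhe, Bhf, Bef, Beh, Bfh, Bfe, lie_self]
    match_scalars <;> (ring_nf; try simp [Complex.I_sq]; try ring_nf)
  · -- ⁅Z, E⁆ = -(2 • E)
    rw [two_smul]
    simp only [smul_add, smul_sub, smul_smul]
    simp only [lie_add, add_lie, lie_sub, sub_lie]
    simp only [sl, ls]
    simp only [Bhe, Bhf, Bef, Beh, Bfh, Bfe, lie_self]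
    match_scalars <;> (ring_nf; try simp [Complex.I_sq]; try ring_nf)
  · -- ⁅Ebar, E⁆ = Z
    simp only [smul_add, smul_sub, smul_smul]
    simp only [lie_add, add_lie, lie_sub, sub_lie]
    simp only [sl, ls]
    simp only [Bhe, Bhf, Bef, Beh, Bfh, Bfe, lie_self]
    match_scalars <;> (ring_nf; try simp [Complex.I_sq]; try ring_nf)
  · -- Ebar ≠ 0
    intro h0
    apply hh0
    rw [hte, htf, hth] at h0
    simp only [smul_add, smul_sub, smul_smul, TensorProduct.smul_tmul',
      smul_eq_mul, mul_one] at h0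
    have hφ := congrArg
      (((TensorProduct.lid ℝ gR).toLinearMap ∘ₗ
        LinearMap.rTensor gR Complex.imLm)) h0
    simp only [map_zero, map_add, map_sub, LinearMap.coe_comp,
      Function.comp_apply, LinearMap.rTensor_tmul] at hφ
    simp only [Complex.imLm, LinearMap.coe_mk, AddHom.coe_mk,
      TensorProduct.lid_tmul, Complex.inv_im, Complex.mul_im, Complex.I_im,
      Complex.I_re, Complex.inv_re] at hφ
    norm_num at hφ
    try exact hφ
  · -- θ_C Z = Z
    simp only [map_smul, map_sub, Te, Tf]
    match_scalars <;> (ring_nf; try simp [Complex.I_sq]; try ring_nf)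
  · -- θ_C E = -E
    simp only [map_smul, map_add, Te, Tf, Th]
    match_scalars <;> (ring_nf; try simp [Complex.I_sq]; try ring_nf)
  · -- θ_C Ebar = -Ebar
    simp only [map_smul, map_add, map_sub, Te, Tf, Th]
    match_scalars <;> (ring_nf; try simp [Complex.I_sq]; try ring_nf)
  · -- conjC E = Ebar
    rw [conjC]
    simp only [hte, htf, hth, TensorProduct.smul_tmul', smul_add, smul_sub,
      smul_smul, smul_eq_mul, mul_one, map_add, map_sub, TensorProduct.map_tmul,
      AlgEquiv.toLinearMap_apply, Complex.conjAe_coe, LinearMap.id_coe, id_eq,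
      map_mul, map_inv₀, Complex.conj_I, Complex.conj_ofNat, map_ofNat]
    rw [show (2⁻¹ * -Complex.I : ℂ) = -(2⁻¹ * Complex.I) by ring,
      TensorProduct.neg_tmul, ← sub_eq_add_neg]
end

section
/- Let V be a finite-dimensional vector space over a field of characteristic zero and N a nilpotent endomorphism of V. Then there is exactly one increasing filtration (W_ℓ)_{ℓ ∈ ℤ} of V by subspaces, with W_ℓ = 0 for ℓ sufficiently small and W_ℓ = V for ℓ sufficiently large, such that (i) W_ℓ ⊆ W_{ℓ+1} for all ℓ, (ii) N(W_ℓ) ⊆ W_{ℓ−2} for all ℓ, and (iii) for every ℓ ≥ 0 the map induced by N^ℓ from Gr_ℓ = W_ℓ/W_{ℓ−1} to Gr_{−ℓ} = W_{−ℓ}/W_{−ℓ−1} is an isomorphism. -/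
set_option maxHeartbeats 1000000
set_option synthInstance.maxHeartbeats 1000000

open Polynomial

/-- `W` is a Jacobson–Morosov (weight) filtration for the nilpotent endomorphism `N`:
an increasing, exhaustive and separated filtration indexed by `ℤ` with `N (W ℓ) ⊆ W (ℓ-2)`,
such that for every `ℓ ≥ 0` the map induced by `N^ℓ` from `Gr_ℓ = W ℓ / W (ℓ-1)` to
`Gr_{-ℓ} = W (-ℓ) / W (-ℓ-1)` is an isomorphism (expressed elementwise: injectivity and
surjectivity of the induced map on the graded pieces). -/
def IsWeightFiltration {K V : Type*} [Field K] [AddCommGroup V] [Module K V]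
    (N : Module.End K V) (W : ℤ → Submodule K V) : Prop :=
  Monotone W ∧
  (∃ a : ℤ, ∀ ℓ : ℤ, ℓ ≤ a → W ℓ = ⊥) ∧
  (∃ b : ℤ, ∀ ℓ : ℤ, b ≤ ℓ → W ℓ = ⊤) ∧
  (∀ ℓ : ℤ, Submodule.map N (W ℓ) ≤ W (ℓ - 2)) ∧
  (∀ ℓ : ℕ,
    (∀ x ∈ W (ℓ : ℤ), (N ^ ℓ) x ∈ W (-(ℓ : ℤ) - 1) → x ∈ W ((ℓ : ℤ) - 1)) ∧
    W (-(ℓ : ℤ)) ≤ Submodule.map (N ^ ℓ) (W (ℓ : ℤ)) ⊔ W (-(ℓ : ℤ) - 1))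

namespace JMAux

variable {K V : Type*} [Field K] [AddCommGroup V] [Module K V]

lemma mem_of_mapPow {N : Module.End K V} {W : ℤ → Submodule K V}
    (h4 : ∀ ℓ : ℤ, Submodule.map N (W ℓ) ≤ W (ℓ - 2)) (n : ℕ) :
    ∀ (m : ℤ), ∀ x ∈ W m, (N ^ n) x ∈ W (m - 2 * n) := by
  induction n with
  | zero => intro m x hx; simpa using hx
  | succ n ih =>
    intro m x hx
    have h1 : N x ∈ W (m - 2) := h4 m (Submodule.mem_map_of_mem hx)
    have h2 := ih (m - 2) (N x) h1
    have h3 : (N ^ (n + 1)) x = (N ^ n) (N x) := by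
      rw [pow_succ, Module.End.mul_apply]
    rw [h3]
    have h4' : m - 2 - 2 * (n : ℤ) = m - 2 * ((n : ℕ) + 1 : ℕ) := by push_cast; ring
    rwa [h4'] at h2

lemma wf_top_bot {N : Module.End K V} {W : ℤ → Submodule K V}
    (hW : IsWeightFiltration N W) (k : ℕ) (hk : N ^ (k + 1) = 0) :
    (∀ ℓ : ℤ, (k : ℤ) ≤ ℓ → W ℓ = ⊤) ∧ (∀ ℓ : ℤ, ℓ ≤ -(k : ℤ) - 1 → W ℓ = ⊥) := by
  obtain ⟨hmono, ⟨a, ha⟩, ⟨b, hb⟩, h4, h5⟩ := hW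
  have hz : ∀ j : ℕ, k + 1 ≤ j → (N ^ j : Module.End K V) = 0 :=
    fun j hj => pow_eq_zero_of_le hj hk
  -- steps at the top
  have hstep : ∀ j : ℕ, k + 1 ≤ j → W ((j : ℤ)) = W ((j : ℤ) - 1) := by
    intro j hj
    refine le_antisymm (fun x hx => (h5 j).1 x hx ?_) (hmono (by omega))
    rw [hz j hj]
    exact Submodule.zero_mem _
  have hstep' : ∀ j : ℕ, k + 1 ≤ j → W (-(j : ℤ)) = W (-(j : ℤ) - 1) := by
    intro j hj
    refine le_antisymm (fun x hx => ?_) (hmono (by omega))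
    obtain ⟨y, ⟨y', _, rfl⟩, z, hz', rfl⟩ := Submodule.mem_sup.mp ((h5 j).2 hx)
    rw [hz j hj]
    simpa using hz'
  -- W k = ⊤
  have hchain : ∀ j : ℕ, W ((k : ℤ) + j) ≤ W (k : ℤ) := by
    intro j
    induction j with
    | zero => simp
    | succ j ih =>
      have e1 : (k : ℤ) + (j + 1 : ℕ) = ((k + j + 1 : ℕ) : ℤ) := by push_cast; ring
      have e2 : ((k + j + 1 : ℕ) : ℤ) - 1 = (k : ℤ) + j := by push_cast; ring
      rw [e1, hstep (k + j + 1) (by omega), e2]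
      exact ih
  have htopk : W (k : ℤ) = ⊤ := by
    have h1 : W ((k : ℤ) + (b - k).toNat) = ⊤ := hb _ (by omega)
    exact top_le_iff.mp (h1 ▸ hchain (b - k).toNat)
  have hbotchain : ∀ j : ℕ, W (-(k : ℤ) - 1) ≤ W (-(k : ℤ) - 1 - j) := by
    intro j
    induction j with
    | zero => simp
    | succ j ih =>
      have e1 : -(k : ℤ) - 1 - j = -((k + j + 1 : ℕ) : ℤ) := by push_cast; ring
      have e2 : -((k + j + 1 : ℕ) : ℤ) - 1 = -(k : ℤ) - 1 - (j + 1 : ℕ) := by push_cast; ring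
      calc W (-(k : ℤ) - 1) ≤ W (-(k : ℤ) - 1 - j) := ih
        _ = W (-((k + j + 1 : ℕ) : ℤ)) := by rw [e1]
        _ = W (-(k : ℤ) - 1 - (j + 1 : ℕ)) := by rw [hstep' (k + j + 1) (by omega), e2]
  have hbotk : W (-(k : ℤ) - 1) = ⊥ := by
    have h1 : W (-(k : ℤ) - 1 - (a.natAbs + k + 1 : ℕ)) = ⊥ := ha _ (by omega)
    exact le_bot_iff.mp (h1 ▸ hbotchain (a.natAbs + k + 1))
  constructor
  · intro ℓ hℓ
    exact top_le_iff.mp (htopk ▸ hmono hℓ)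
  · intro ℓ hℓ
    exact le_bot_iff.mp (hbotk ▸ hmono hℓ)

lemma wf_inter {N : Module.End K V} {W : ℤ → Submodule K V}
    (hW : IsWeightFiltration N W) (ℓ : ℕ) :
    W ((ℓ : ℤ) - 1) = W (ℓ : ℤ) ⊓ Submodule.comap (N ^ ℓ : Module.End K V) (W (-(ℓ : ℤ) - 1)) := by
  obtain ⟨hmono, -, -, h4, h5⟩ := hW
  refine le_antisymm (fun x hx => ?_) (fun x hx => (h5 ℓ).1 x hx.1 hx.2)
  refine ⟨hmono (by omega) hx, ?_⟩
  have h := mem_of_mapPow h4 ℓ ((ℓ : ℤ) - 1) x hx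
  have e : (ℓ : ℤ) - 1 - 2 * ℓ = -(ℓ : ℤ) - 1 := by ring
  rwa [e] at h

lemma wf_sup {N : Module.End K V} {W : ℤ → Submodule K V}
    (hW : IsWeightFiltration N W) (ℓ : ℕ) :
    W (-(ℓ : ℤ)) = Submodule.map (N ^ ℓ : Module.End K V) (W (ℓ : ℤ)) ⊔ W (-(ℓ : ℤ) - 1) := by
  obtain ⟨hmono, -, -, h4, h5⟩ := hW
  refine le_antisymm ((h5 ℓ).2) (sup_le ?_ (hmono (by omega)))
  rintro x ⟨y, hy, rfl⟩
  have := mem_of_mapPow h4 ℓ (ℓ : ℤ) y hy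
  rwa [show (ℓ : ℤ) - 2 * ℓ = -(ℓ : ℤ) from by ring] at this

lemma wf_unique {N : Module.End K V} (k : ℕ) (hk : N ^ (k + 1) = 0)
    {W W' : ℤ → Submodule K V} (hW : IsWeightFiltration N W)
    (hW' : IsWeightFiltration N W') : W = W' := by
  have hT := wf_top_bot hW k hk
  have hT' := wf_top_bot hW' k hk
  have key : ∀ i : ℕ, ∀ m : ℤ, ((k : ℤ) + 1 - i ≤ m ∨ m ≤ -((k : ℤ) + 1 - i) - 1) → W m = W' m := by
    intro i
    induction i with
    | zero =>
      intro m hm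
      rcases hm with hm | hm
      · rw [hT.1 m (by omega), hT'.1 m (by omega)]
      · rw [hT.2 m (by omega), hT'.2 m (by omega)]
    | succ i ih =>
      intro m hm
      by_cases hc : (k : ℤ) + 1 - i ≤ m ∨ m ≤ -((k : ℤ) + 1 - i) - 1
      · exact ih m hc
      · push_neg at hc
        have hik : i ≤ k := by omega
        set ℓ₀ : ℕ := k - i with hℓ₀
        have hcast : ((ℓ₀ + 1 : ℕ) : ℤ) = (k : ℤ) + 1 - i := by
          push_cast; omega
        have hm' : m = ((ℓ₀ + 1 : ℕ) : ℤ) - 1 ∨ m = -((ℓ₀ + 1 : ℕ) : ℤ) := by omega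
        have hWa : W ((ℓ₀ + 1 : ℕ) : ℤ) = W' ((ℓ₀ + 1 : ℕ) : ℤ) := ih _ (by omega)
        have hWb : W (-((ℓ₀ + 1 : ℕ) : ℤ) - 1) = W' (-((ℓ₀ + 1 : ℕ) : ℤ) - 1) := ih _ (by omega)
        rcases hm' with rfl | rfl
        · rw [wf_inter hW (ℓ₀ + 1), wf_inter hW' (ℓ₀ + 1), hWa, hWb]
        · rw [wf_sup hW (ℓ₀ + 1), wf_sup hW' (ℓ₀ + 1), hWa, hWb]
  funext m
  exact key (k + 1) m (by omega)

section Block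

variable (K : Type*) [Field K]

/-- Half of `e - ℓ`, rounded up from below and clamped to `[0, e]`:
the exponent of the root in the weight filtration of a single Jordan block of size `e`. -/
def bT (e : ℕ) (ℓ : ℤ) : ℕ := (min (e : ℤ) (((e : ℤ) - ℓ) / 2)).toNat

/-- The class of `X` in `K[X] ⧸ (X^e)`. -/
noncomputable def qr (e : ℕ) : K[X] ⧸ Ideal.span {(X : K[X]) ^ e} :=
  Ideal.Quotient.mk _ (X : K[X])

/-- Multiplication by the root, as a `K`-endomorphism of the Jordan block. -/
noncomputable def blockN (e : ℕ) : Module.End K (K[X] ⧸ Ideal.span {(X : K[X]) ^ e}) :=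
  LinearMap.mulLeft K (qr K e)

/-- The weight filtration of a single Jordan block. -/
noncomputable def blockW (e : ℕ) (ℓ : ℤ) : Submodule K (K[X] ⧸ Ideal.span {(X : K[X]) ^ e}) :=
  Submodule.restrictScalars K (Ideal.span {qr K e ^ bT e ℓ})

variable {K}

lemma mem_blockW {e : ℕ} {ℓ : ℤ} {x : K[X] ⧸ Ideal.span {(X : K[X]) ^ e}} :
    x ∈ blockW K e ℓ ↔ qr K e ^ bT e ℓ ∣ x := by
  rw [blockW, Submodule.restrictScalars_mem, Ideal.mem_span_singleton]

lemma blockN_pow (e n : ℕ) (x : K[X] ⧸ Ideal.span {(X : K[X]) ^ e}) :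
    ((blockN K e) ^ n) x = qr K e ^ n * x := by
  induction n generalizing x with
  | zero => simp
  | succ n ih =>
    rw [pow_succ, Module.End.mul_apply, show (blockN K e) x = qr K e * x from rfl, ih, pow_succ]
    ring

lemma qr_pow_eq (e m : ℕ) : qr K e ^ m = Ideal.Quotient.mk _ ((X : K[X]) ^ m) := by
  rw [qr, map_pow]

lemma qr_pow_self (e : ℕ) : qr K e ^ e = 0 := by
  rw [qr_pow_eq, Ideal.Quotient.eq_zero_iff_mem]
  exact Ideal.subset_span rfl

lemma qr_ann {e m : ℕ} (hm : m ≤ e) {y : K[X] ⧸ Ideal.span {(X : K[X]) ^ e}}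
    (h : qr K e ^ m * y = 0) : qr K e ^ (e - m) ∣ y := by
  obtain ⟨g, rfl⟩ := Ideal.Quotient.mk_surjective y
  rw [qr_pow_eq, ← map_mul, Ideal.Quotient.eq_zero_iff_mem, Ideal.mem_span_singleton] at h
  obtain ⟨c, hc⟩ := h
  have hg : g = X ^ (e - m) * c := by
    apply mul_left_cancel₀ (pow_ne_zero m (Polynomial.X_ne_zero : (X : K[X]) ≠ 0))
    rw [hc, ← mul_assoc, ← pow_add]
    congr 2
    omega
  refine ⟨Ideal.Quotient.mk _ c, ?_⟩
  rw [qr_pow_eq, ← map_mul, hg]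

lemma isWF_block (e : ℕ) : IsWeightFiltration (blockN K e) (blockW K e) := by
  refine ⟨?_, ⟨-(e : ℤ), ?_⟩, ⟨(e : ℤ), ?_⟩, ?_, ?_⟩
  · -- monotone
    intro ℓ ℓ' hle
    intro x hx
    rw [mem_blockW] at hx ⊢
    exact dvd_trans (pow_dvd_pow _ (by unfold bT; omega)) hx
  · -- bot
    intro ℓ hℓ
    have ht : bT e ℓ = e := by unfold bT; omega
    rw [eq_bot_iff]
    intro x hx
    rw [mem_blockW, ht, qr_pow_self] at hx
    simpa using (zero_dvd_iff.mp hx)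
  · -- top
    intro ℓ hℓ
    have ht : bT e ℓ = 0 := by unfold bT; omega
    rw [eq_top_iff]
    intro x _
    rw [mem_blockW, ht, pow_zero]
    exact one_dvd x
  · -- lowering
    intro ℓ
    rintro _ ⟨x, hx, rfl⟩
    simp only [SetLike.mem_coe, mem_blockW] at hx ⊢
    obtain ⟨u, hu⟩ := hx
    have ht : bT e (ℓ - 2) ≤ bT e ℓ + 1 := by unfold bT; omega
    refine dvd_trans (pow_dvd_pow _ ht) ⟨u, ?_⟩
    rw [blockN, LinearMap.mulLeft_apply, hu, pow_succ]
    ring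
  · -- graded iso
    intro ℓ
    constructor
    · -- injectivity
      intro x hx h2
      rw [mem_blockW] at hx h2 ⊢
      rw [blockN_pow] at h2
      by_cases hcase : bT e ((ℓ : ℤ) - 1) ≤ bT e (ℓ : ℤ)
      · exact dvd_trans (pow_dvd_pow _ hcase) hx
      · have key : bT e ((ℓ : ℤ) - 1) = bT e (ℓ : ℤ) + 1 ∧ ℓ + bT e (ℓ : ℤ) ≤ e ∧
            bT e (-(ℓ : ℤ) - 1) = ℓ + bT e (ℓ : ℤ) + 1 ∧
            e - (ℓ + bT e (ℓ : ℤ)) = bT e (ℓ : ℤ) + 1 := by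
          unfold bT at *
          omega
        obtain ⟨k1, k2, k3, k4⟩ := key
        set t0 := bT e (ℓ : ℤ) with ht0
        obtain ⟨u, hu⟩ := hx
        obtain ⟨c, hc⟩ := h2
        rw [hu, k3] at hc
        have hzero : qr K e ^ (ℓ + t0) * (u - qr K e * c) = 0 := by
          rw [pow_add] at hc ⊢
          rw [pow_succ] at hc
          linear_combination hc
        obtain ⟨d, hd⟩ := qr_ann k2 hzero
        rw [k4] at hd
        rw [k1, hu]
        refine ⟨c + qr K e ^ t0 * d, ?_⟩
        rw [pow_succ]
        linear_combination (qr K e ^ t0) * hd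
    · -- surjectivity
      intro x hx
      rw [mem_blockW] at hx
      by_cases hcase : bT e (-(ℓ : ℤ) - 1) ≤ bT e (-(ℓ : ℤ))
      · exact Submodule.mem_sup_right (mem_blockW.mpr (dvd_trans (pow_dvd_pow _ hcase) hx))
      · have key : ℓ ≤ bT e (-(ℓ : ℤ)) ∧ bT e (ℓ : ℤ) = bT e (-(ℓ : ℤ)) - ℓ := by
          unfold bT at *
          omega
        obtain ⟨k1, k2⟩ := key
        set s := bT e (-(ℓ : ℤ)) with hs
        obtain ⟨u, hu⟩ := hx
        refine Submodule.mem_sup_left ⟨qr K e ^ (s - ℓ) * u, ?_, ?_⟩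
        · simp only [SetLike.mem_coe, mem_blockW, k2]
          exact dvd_mul_right _ _
        · rw [blockN_pow, ← mul_assoc, ← pow_add, Nat.add_sub_cancel' k1, hu]

end Block

section Pi

variable {K : Type*} [Field K] {ι : Type*} [Fintype ι] {Vf : ι → Type*}
  [∀ i, AddCommGroup (Vf i)] [∀ i, Module K (Vf i)]

lemma pi_map_pow (N : ∀ i, Module.End K (Vf i)) (n : ℕ) (x : ∀ i, Vf i) (i : ι) :
    (((LinearMap.pi fun i => (N i).comp (LinearMap.proj i) : Module.End K (∀ i, Vf i))) ^ n) x i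
      = ((N i) ^ n) (x i) := by
  induction n generalizing x with
  | zero => simp
  | succ n ih =>
    rw [pow_succ, Module.End.mul_apply, ih, pow_succ, Module.End.mul_apply,
      LinearMap.pi_apply, LinearMap.comp_apply, LinearMap.proj_apply]

lemma isWF_pi (N : ∀ i, Module.End K (Vf i)) (W : ∀ i, ℤ → Submodule K (Vf i))
    (h : ∀ i, IsWeightFiltration (N i) (W i)) :
    IsWeightFiltration (LinearMap.pi fun i => (N i).comp (LinearMap.proj i) : Module.End K (∀ i, Vf i))
      (fun ℓ => Submodule.pi Set.univ fun i => W i ℓ) := by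
  refine ⟨?_, ?_, ?_, ?_, ?_⟩
  · intro ℓ ℓ' hle x hx
    rw [Submodule.mem_pi] at hx ⊢
    exact fun i hi => (h i).1 hle (hx i hi)
  · -- bot
    choose a ha using fun i => (h i).2.1
    rcases isEmpty_or_nonempty ι with hι | hι
    · refine ⟨0, fun ℓ _ => ?_⟩
      rw [eq_bot_iff]
      intro x _
      have : x = 0 := funext fun i => (IsEmpty.elim hι i)
      simp [this]
    · refine ⟨Finset.univ.inf' Finset.univ_nonempty a, fun ℓ hℓ => ?_⟩
      rw [eq_bot_iff]
      intro x hx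
      rw [Submodule.mem_pi] at hx
      have hx0 : ∀ i, x i = 0 := by
        intro i
        have h1 := hx i (Set.mem_univ i)
        rw [ha i ℓ (le_trans hℓ (Finset.inf'_le a (Finset.mem_univ i)))] at h1
        simpa using h1
      have : x = 0 := funext hx0
      simp [this]
  · -- top
    choose b hb using fun i => (h i).2.2.1
    rcases isEmpty_or_nonempty ι with hι | hι
    · refine ⟨0, fun ℓ _ => ?_⟩
      rw [eq_top_iff]
      intro x _
      rw [Submodule.mem_pi]
      exact fun i _ => (IsEmpty.elim hι i)
    · refine ⟨Finset.univ.sup' Finset.univ_nonempty b, fun ℓ hℓ => ?_⟩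
      rw [eq_top_iff]
      intro x _
      rw [Submodule.mem_pi]
      intro i _
      rw [hb i ℓ (le_trans (Finset.le_sup' b (Finset.mem_univ i)) hℓ)]
      trivial
  · -- lowering
    intro ℓ
    rintro _ ⟨x, hx, rfl⟩
    rw [SetLike.mem_coe, Submodule.mem_pi] at hx
    rw [Submodule.mem_pi]
    intro i _
    have h1 : (N i) (x i) ∈ W i (ℓ - 2) :=
      (h i).2.2.2.1 ℓ (Submodule.mem_map_of_mem (hx i (Set.mem_univ i)))
    simpa [LinearMap.pi_apply] using h1
  · intro ℓ
    constructor
    · -- injectivity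
      intro x hx h2
      rw [Submodule.mem_pi] at hx h2 ⊢
      intro i hi
      refine ((h i).2.2.2.2 ℓ).1 (x i) (hx i hi) ?_
      have := h2 i hi
      rwa [pi_map_pow] at this
    · -- surjectivity
      intro x hx
      rw [Submodule.mem_pi] at hx
      have hc : ∀ i, ∃ y ∈ W i (ℓ : ℤ), ∃ z ∈ W i (-(ℓ : ℤ) - 1), ((N i) ^ ℓ) y + z = x i := by
        intro i
        have h1 := ((h i).2.2.2.2 ℓ).2 (hx i (Set.mem_univ i))
        obtain ⟨y', hy', z, hz, hsum⟩ := Submodule.mem_sup.mp h1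
        obtain ⟨y, hy, rfl⟩ := Submodule.mem_map.mp hy'
        exact ⟨y, hy, z, hz, hsum⟩
      choose y hy z hz hsum using hc
      refine Submodule.mem_sup.mpr
        ⟨((LinearMap.pi fun i => (N i).comp (LinearMap.proj i) : Module.End K (∀ i, Vf i)) ^ ℓ) y,
          Submodule.mem_map_of_mem (Submodule.mem_pi.mpr fun i _ => hy i),
          z, Submodule.mem_pi.mpr fun i _ => hz i, ?_⟩
      funext i
      rw [Pi.add_apply, pi_map_pow]
      exact hsum i

end Pi

section Transport

variable {K : Type*} [Field K] {V V' : Type*} [AddCommGroup V] [Module K V]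
  [AddCommGroup V'] [Module K V']

lemma comm_pow (Φ : V ≃ₗ[K] V') (N : Module.End K V) (N' : Module.End K V')
    (hc : ∀ v, Φ (N v) = N' (Φ v)) (n : ℕ) (v : V) :
    Φ ((N ^ n) v) = (N' ^ n) (Φ v) := by
  induction n generalizing v with
  | zero => simp
  | succ n ih =>
    rw [pow_succ, Module.End.mul_apply, ih, hc, pow_succ, Module.End.mul_apply]

lemma isWF_comap (Φ : V ≃ₗ[K] V') (N : Module.End K V) (N' : Module.End K V')
    (hc : ∀ v, Φ (N v) = N' (Φ v)) {W' : ℤ → Submodule K V'}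
    (h : IsWeightFiltration N' W') :
    IsWeightFiltration N (fun ℓ => (W' ℓ).comap (Φ : V →ₗ[K] V')) := by
  obtain ⟨hmono, ⟨a, ha⟩, ⟨b, hb⟩, h4, h5⟩ := h
  refine ⟨?_, ⟨a, ?_⟩, ⟨b, ?_⟩, ?_, ?_⟩
  · intro ℓ ℓ' hle
    exact Submodule.comap_mono (hmono hle)
  · intro ℓ hℓ
    rw [eq_bot_iff]
    intro x hx
    rw [Submodule.mem_comap, ha ℓ hℓ, Submodule.mem_bot] at hx
    have : x = 0 := by
      apply Φ.injective
      simpa using hx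
    simp [this]
  · intro ℓ hℓ
    rw [eq_top_iff]
    intro x _
    rw [Submodule.mem_comap, hb ℓ hℓ]
    trivial
  · intro ℓ
    rintro _ ⟨x, hx, rfl⟩
    rw [SetLike.mem_coe, Submodule.mem_comap] at hx
    rw [Submodule.mem_comap]
    show Φ (N x) ∈ W' (ℓ - 2)
    rw [hc]
    exact h4 ℓ (Submodule.mem_map_of_mem hx)
  · intro ℓ
    constructor
    · intro x hx h2
      rw [Submodule.mem_comap] at hx h2 ⊢
      refine (h5 ℓ).1 (Φ x) hx ?_
      rw [← comm_pow Φ N N' hc]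
      exact h2
    · intro x hx
      rw [Submodule.mem_comap] at hx
      obtain ⟨y', hy', z', hz', hsum⟩ := Submodule.mem_sup.mp ((h5 ℓ).2 hx)
      obtain ⟨y, hy, rfl⟩ := Submodule.mem_map.mp hy'
      refine Submodule.mem_sup.mpr
        ⟨(N ^ ℓ) (Φ.symm y), Submodule.mem_map_of_mem ?_, Φ.symm z', ?_, ?_⟩
      · rw [Submodule.mem_comap]
        simpa using hy
      · rw [Submodule.mem_comap]
        simpa using hz'
      · apply Φ.injective
        rw [map_add, comm_pow Φ N N' hc]
        simpa using hsum
end Transport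

section Main

variable {K : Type*} [Field K] {V : Type*} [AddCommGroup V] [Module K V]

lemma exists_wf [FiniteDimensional K V] (N : Module.End K V) (hN : IsNilpotent N) :
    ∃ W, IsWeightFiltration N W := by
  classical
  obtain ⟨n, hn⟩ := hN
  have hn1 : N ^ (n + 1) = 0 := by rw [pow_succ, hn, zero_mul]
  -- move to `Fin ν → K`, which lives in the same universe as `K`
  set ν := Module.finrank K V with hν
  let E0 : V ≃ₗ[K] (Fin ν → K) := (Module.finBasis K V).equivFun
  let N₁ : Module.End K (Fin ν → K) := E0.conj N
  have hc0 : ∀ v, E0 (N v) = N₁ (E0 v) := by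
    intro v
    simp [N₁, LinearEquiv.conj_apply]
  have hc0n : ∀ (m : ℕ) (v : V), E0 ((N ^ m) v) = (N₁ ^ m) (E0 v) := comm_pow E0 N N₁ hc0
  have hN₁ : N₁ ^ (n + 1) = 0 := by
    refine LinearMap.ext fun x => ?_
    have h := hc0n (n + 1) (E0.symm x)
    rw [hn1] at h
    simpa using h.symm
  -- the `K[X]`-module structure induced by `N₁`
  haveI : Module.Finite K (Module.AEval' N₁) := Module.Finite.equiv (Module.AEval'.of N₁)
  haveI : Module.Finite K[X] (Module.AEval' N₁) :=
    Module.Finite.of_restrictScalars_finite K K[X] _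
  have hXpow : ∀ (m : ℕ) (v : Fin ν → K),
      (X : K[X]) ^ m • (Module.AEval'.of N₁ v) = Module.AEval'.of N₁ ((N₁ ^ m) v) := by
    intro m
    induction m with
    | zero => intro v; simp
    | succ m ih =>
      intro v
      rw [pow_succ', mul_smul, ih v, Module.AEval'.X_smul_of]
      congr 1
      rw [pow_succ', Module.End.mul_apply]
  have hsmul0 : ∀ x : Module.AEval' N₁, (X : K[X]) ^ (n + 1) • x = 0 := by
    intro x
    obtain ⟨y, rfl⟩ := (Module.AEval'.of N₁).surjective x
    rw [hXpow, hN₁]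
    simp
  have htor : Module.IsTorsion K[X] (Module.AEval' N₁) := fun x =>
    ⟨⟨(X : K[X]) ^ (n + 1), mem_nonZeroDivisors_of_ne_zero (pow_ne_zero _ X_ne_zero)⟩,
      hsmul0 x⟩
  obtain ⟨ι, hfin, p, hp, ee, ⟨Ψ⟩⟩ := Module.equiv_directSum_of_isTorsion htor
  haveI := hfin
  -- each prime power divides `X ^ (n+1)`
  have hannDS : ∀ z : DirectSum ι fun i => K[X] ⧸ Submodule.span K[X] {p i ^ ee i},
      (X : K[X]) ^ (n + 1) • z = 0 := by
    intro z
    obtain ⟨w, rfl⟩ := Ψ.surjective z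
    rw [← map_smul, hsmul0, map_zero]
  have hdvd : ∀ i, p i ^ ee i ∣ (X : K[X]) ^ (n + 1) := by
    intro i
    have h1 := hannDS (DirectSum.lof K[X] ι _ i (Submodule.Quotient.mk 1))
    have h2 := congrArg (fun z => z i) h1
    simp only [DirectSum.smul_apply, DirectSum.lof_apply, DirectSum.zero_apply] at h2
    rw [← Submodule.Quotient.mk_smul, smul_eq_mul, mul_one, Submodule.Quotient.mk_eq_zero] at h2
    exact Ideal.mem_span_singleton.mp h2
  have hspan : ∀ i, Submodule.span K[X] {p i ^ ee i} = Ideal.span {(X : K[X]) ^ ee i} := by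
    intro i
    show Ideal.span {p i ^ ee i} = Ideal.span {(X : K[X]) ^ ee i}
    rw [Ideal.span_singleton_eq_span_singleton]
    rcases Nat.eq_zero_or_pos (ee i) with h0 | hpos
    · simp [h0]
    · have h1 : p i ∣ (X : K[X]) ^ (n + 1) :=
        dvd_trans (dvd_pow_self (p i) (by omega)) (hdvd i)
      have hprime : Prime (p i) := UniqueFactorizationMonoid.irreducible_iff_prime.mp (hp i)
      have hpX : p i ∣ (X : K[X]) := hprime.dvd_of_dvd_pow h1
      exact ((hp i).associated_of_dvd Polynomial.irreducible_X hpX).pow_pow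
  -- assemble the equivalence with a product of Jordan blocks
  let Θ : Module.AEval' N₁ ≃ₗ[K[X]] (∀ i, K[X] ⧸ Ideal.span {(X : K[X]) ^ ee i}) :=
    Ψ.trans ((DirectSum.linearEquivFunOnFintype K[X] ι _).trans
      (LinearEquiv.piCongrRight fun i => Submodule.quotEquivOfEq _ _ (hspan i)))
  let Φ : V ≃ₗ[K] (∀ i, K[X] ⧸ Ideal.span {(X : K[X]) ^ ee i}) :=
    E0.trans ((Module.AEval'.of N₁).trans (Θ.restrictScalars K))
  let Npi : Module.End K (∀ i, K[X] ⧸ Ideal.span {(X : K[X]) ^ ee i}) :=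
    LinearMap.pi fun i => (blockN K (ee i)).comp (LinearMap.proj i)
  have hXsmul : ∀ (eI : ℕ) (q : K[X] ⧸ Ideal.span {(X : K[X]) ^ eI}),
      (X : K[X]) • q = blockN K eI q := by
    intro eI q
    obtain ⟨g, rfl⟩ := Ideal.Quotient.mk_surjective q
    rw [blockN, LinearMap.mulLeft_apply, qr, ← map_mul, ← smul_eq_mul]
    exact (Submodule.Quotient.mk_smul _ X g).symm
  have hcomm : ∀ v, Φ (N v) = Npi (Φ v) := by
    intro v
    show (Θ.restrictScalars K) ((Module.AEval'.of N₁) (E0 (N v))) = _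
    rw [hc0, ← Module.AEval'.X_smul_of]
    have h1 : (Θ.restrictScalars K) ((X : K[X]) • (Module.AEval'.of N₁ (E0 v)))
        = (X : K[X]) • (Θ.restrictScalars K) ((Module.AEval'.of N₁) (E0 v)) := by
      show Θ _ = _
      rw [map_smul]
      rfl
    rw [h1]
    funext i
    rw [Pi.smul_apply, hXsmul]
    rfl
  exact ⟨_, isWF_comap Φ N Npi hcomm (isWF_pi _ _ (fun i => isWF_block (ee i)))⟩

end Main

end JMAux

/-- **Existence and uniqueness of the Jacobson–Morosov weight filtration.**
For a nilpotent endomorphism `N` of a finite-dimensional vector space over a field of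
characteristic zero, there is exactly one weight filtration for `N`. -/
theorem existsUnique_weightFiltration
    (K : Type*) [Field K] [CharZero K]
    (V : Type*) [AddCommGroup V] [Module K V] [FiniteDimensional K V]
    (N : Module.End K V) (hN : IsNilpotent N) :
    ∃! W : ℤ → Submodule K V, IsWeightFiltration N W := by
  obtain ⟨W, hW⟩ := JMAux.exists_wf N hN
  obtain ⟨n, hn⟩ := hN
  have hn1 : N ^ (n + 1) = 0 := by rw [pow_succ, hn, zero_mul]
  exact ⟨W, hW, fun W' hW' => JMAux.wf_unique n hn1 hW' hW⟩
end
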